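/- Let q = 5^k with k even and μ_{q+1} = {x ∈ F_{q^2} : x^{q+1} = 1}. For any a ∈ μ_{q+1} with a^4 ≠ -2, the element b = 2a(a^4 - 2)/(a^4 + 2) also lies in μ_{q+1}. -/

import Mathlib

theorem b_mem_mu (k : ℕ) (hk : Even k) (hk0 : 0 < k)
    (E : Type*) [Field E] [Fintype E] (hE : Fintype.card E = (5 ^ k) ^ 2)
    (a : E) (ha : a ^ (5 ^ k + 1) = 1) (ha4 : a ^ 4 ≠ -2) :
    (2 * a * (a ^ 4 - 2) / (a ^ 4 + 2)) ^ (5 ^ k + 1) = 1 := by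
  -- characteristic is 5
  haveI := ringChar.charP E
  obtain ⟨n, hp, hcard⟩ := FiniteField.card E (ringChar E)
  have hr5 : ringChar E = 5 := by
    have h1 : ringChar E ∣ 5 ^ (2 * k) := by
      rw [show (5:ℕ) ^ (2 * k) = (5 ^ k) ^ 2 by ring, ← hE, hcard]
      exact dvd_pow_self _ n.pos.ne'
    have := hp.dvd_of_dvd_pow h1
    exact (Nat.prime_dvd_prime_iff_eq hp (by norm_num)).mp this
  haveI hchar : CharP E 5 := hr5 ▸ ringChar.charP E
  haveI : Fact (Nat.Prime 5) := ⟨by norm_num⟩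
  have h5 : (5 : E) = 0 := by exact_mod_cast CharP.cast_eq_zero E 5
  -- Frobenius
  have hfrob : ∀ x : E, x ^ 5 ^ k = iterateFrobenius E 5 k x := fun x => rfl
  have ha0 : a ≠ 0 := by
    intro h; rw [h, zero_pow (by positivity)] at ha; exact zero_ne_one ha
  have haq : a ^ 5 ^ k = a⁻¹ := by
    field_simp
    rw [pow_succ] at ha; exact ha
  have hd1 : a ^ 4 + 2 ≠ 0 := by
    intro h; apply ha4; linear_combination h
  have hd2 : a ^ 4 - 2 ≠ 0 := by
    intro h
    have h4 : a ^ 4 = 2 := by linear_combination h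
    have : (2 : E) ^ (5 ^ k + 1) = 1 := by
      rw [← h4, ← pow_mul, mul_comm, pow_mul, ha, one_pow]
    rw [pow_succ, hfrob, map_ofNat] at this
    have h3 : (3 : E) = 0 := by linear_combination this
    have h2 : (2 : E) = 0 := by linear_combination h5 - h3
    have h1 : (1 : E) = 0 := by linear_combination h3 - h2
    exact one_ne_zero h1
  rw [pow_succ, hfrob]
  rw [map_div₀, map_mul, map_mul, map_sub, map_add, map_pow, map_ofNat,
    ← hfrob a, haq]
  have hinv4 : (a⁻¹) ^ 4 = (a ^ 4)⁻¹ := by rw [inv_pow]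
  rw [hinv4]
  have ha40 : a ^ 4 ≠ 0 := pow_ne_zero _ ha0
  have hd3 : (a ^ 4)⁻¹ + 2 ≠ 0 := by
    intro h
    have hm : a ^ 4 * ((a ^ 4)⁻¹ + 2) = 0 := by rw [h, mul_zero]
    rw [mul_add, mul_inv_cancel₀ ha40] at hm
    exact hd2 (by linear_combination 3 * hm - (a ^ 4 + 1) * h5)
  have hn : (1 : E) + 2 * a ^ 4 ≠ 0 := by
    have h := mul_ne_zero ha40 hd3
    rwa [mul_add, mul_inv_cancel₀ ha40, mul_comm (a ^ 4) 2] at h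
  field_simp
  linear_combination (3 * a ^ 4 - 2 - 2 * a ^ 8) * h5
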